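/- The formal power series M(z) = ∑_{n≥1} m_n z^n with m_n = 2·3^n/((n+1)(n+2)) · C(2n,n) satisfies 54 z^2 (M(z)+1) = 18z - 1 + (1-12z)^{3/2} as an identity of analytic functions for |z| < 1/12. -/

import Mathlib

open Real Set

/-- Coefficients of `(1-12z)^{3/2}`, defined by the ODE recurrence. -/
noncomputable def aC : ℕ → ℝ
  | 0 => 1
  | n + 1 => (12 * n - 18) / (n + 1) * aC n

lemma aC_succ (n : ℕ) : aC (n + 1) = (12 * n - 18) / (n + 1) * aC n := rfl

lemma aC_rec (n : ℕ) : ((n : ℝ) + 1) * aC (n + 1) = (12 * n - 18) * aC n := by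
  rw [aC_succ]
  have h : ((n : ℝ) + 1) ≠ 0 := by positivity
  field_simp

lemma ratio_bound (x : ℝ) (hx : 0 ≤ x) : |(12 * (x + 1) - 18) / (x + 1 + 1)| ≤ 12 := by
  rw [abs_div, abs_of_nonneg (by linarith : (0:ℝ) ≤ x + 1 + 1),
    div_le_iff₀ (by linarith : (0:ℝ) < x + 1 + 1)]
  rw [abs_le]
  constructor <;> nlinarith

lemma aC_bound : ∀ n, |aC n| ≤ 54 * 12 ^ n
  | 0 => by norm_num [aC]
  | 1 => by
      have h1 : aC 1 = -18 := by rw [show (1:ℕ) = 0 + 1 from rfl, aC_succ]; norm_num [aC]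
      rw [h1]; norm_num
  | (n + 2) => by
      have ih := aC_bound (n + 1)
      have h2 : |aC (n + 2)| ≤ 12 * |aC (n + 1)| := by
        rw [show n + 2 = (n + 1) + 1 from rfl, aC_succ, abs_mul]
        have h := ratio_bound (n : ℝ) (Nat.cast_nonneg n)
        have : |(12 * ((n:ℕ) + 1 : ℕ) - 18 : ℝ) / (((n:ℕ) + 1 : ℕ) + 1)| ≤ 12 := by
          push_cast
          exact h
        exact mul_le_mul_of_nonneg_right this (abs_nonneg _)
      calc |aC (n + 2)| ≤ 12 * |aC (n + 1)| := h2
        _ ≤ 12 * (54 * 12 ^ (n + 1)) := by linarith [abs_nonneg (aC (n + 1))]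
        _ = 54 * 12 ^ (n + 2) := by ring

lemma summable_aC {y : ℝ} (hy : |y| < 1 / 12) : Summable (fun n => aC n * y ^ n) := by
  have h12 : |12 * y| < 1 := by rw [abs_mul]; rw [abs_of_nonneg (by norm_num : (0:ℝ) ≤ 12)]; linarith
  apply Summable.of_norm_bounded (g := fun n => 54 * |12 * y| ^ n)
    (((summable_geometric_of_lt_one (abs_nonneg _) h12)).mul_left 54)
  intro n
  rw [norm_mul, norm_pow]
  calc ‖aC n‖ * ‖y‖ ^ n ≤ (54 * 12 ^ n) * |y| ^ n := by
        exact mul_le_mul_of_nonneg_right (aC_bound n) (by positivity)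
    _ = 54 * |12 * y| ^ n := by rw [abs_mul, mul_pow, abs_of_nonneg (by norm_num : (0:ℝ) ≤ 12)]; ring

lemma summable_n_aC {y : ℝ} (hy : |y| < 1 / 12) :
    Summable (fun n : ℕ => (n : ℝ) * (aC n * y ^ n)) := by
  have h12 : ‖12 * |y|‖ < 1 := by
    rw [Real.norm_eq_abs, abs_of_nonneg (by positivity)]; linarith [abs_nonneg y]
  apply Summable.of_norm_bounded (g := fun n : ℕ => 54 * ((n : ℝ) ^ 1 * (12 * |y|) ^ n))
    ((summable_pow_mul_geometric_of_norm_lt_one 1 h12).mul_left 54)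
  intro n
  rw [norm_mul, norm_mul, norm_pow, Real.norm_natCast, pow_one]
  calc (n : ℝ) * (‖aC n‖ * ‖y‖ ^ n) ≤ (n : ℝ) * ((54 * 12 ^ n) * |y| ^ n) := by
        apply mul_le_mul_of_nonneg_left _ (Nat.cast_nonneg n)
        exact mul_le_mul_of_nonneg_right (aC_bound n) (by positivity)
    _ = 54 * ((n : ℝ) * (12 * |y|) ^ n) := by rw [mul_pow]; ring

/-- The ODE `(1 - 12y) h'(y) = -18 h(y)` at the level of sums. -/
lemma aC_ode {y : ℝ} (hy : |y| < 1 / 12) :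
    (1 - 12 * y) * (∑' n, aC n * ((n : ℝ) * y ^ (n - 1))) = -18 * ∑' n, aC n * y ^ n := by
  have hsa : Summable (fun n => aC n * y ^ n) := summable_aC hy
  have hsn : Summable (fun n : ℕ => (n : ℝ) * (aC n * y ^ n)) := summable_n_aC hy
  have hg2 : Summable (fun n : ℕ => (12 * (n : ℝ) - 18) * (aC n * y ^ n)) := by
    apply ((hsn.mul_left 12).sub (hsa.mul_left 18)).congr
    intro n; ring
  have hshift : ∀ n : ℕ, aC (n + 1) * (((n : ℕ) + 1 : ℕ) * y ^ n) =
      (12 * (n : ℝ) - 18) * (aC n * y ^ n) := by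
    intro n
    have h := aC_rec n
    push_cast
    calc aC (n + 1) * (((n : ℝ) + 1) * y ^ n) = (((n : ℝ) + 1) * aC (n + 1)) * y ^ n := by ring
      _ = ((12 * (n : ℝ) - 18) * aC n) * y ^ n := by rw [h]
      _ = (12 * (n : ℝ) - 18) * (aC n * y ^ n) := by ring
  have hf : Summable (fun n => aC n * ((n : ℝ) * y ^ (n - 1))) := by
    apply (summable_nat_add_iff (f := fun n => aC n * ((n : ℝ) * y ^ (n - 1))) 1).mp
    apply hg2.congr
    intro n
    have := (hshift n).symm
    simpa using this
  have e1 : ∑' n, aC n * ((n : ℝ) * y ^ (n - 1)) =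
      ∑' n : ℕ, (12 * (n : ℝ) - 18) * (aC n * y ^ n) := by
    rw [Summable.tsum_eq_zero_add hf]
    simp only [Nat.cast_zero, zero_mul, mul_zero, zero_add]
    apply tsum_congr
    intro n
    simpa using hshift n
  have e2 : y * (∑' n, aC n * ((n : ℝ) * y ^ (n - 1))) = ∑' n : ℕ, (n : ℝ) * (aC n * y ^ n) := by
    rw [← tsum_mul_left]
    apply tsum_congr
    intro n
    match n with
    | 0 => simp
    | (m + 1) =>
        show y * (aC (m + 1) * (((m + 1 : ℕ) : ℝ) * y ^ (m + 1 - 1))) = _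
        push_cast
        ring
  have e3 : ∑' n : ℕ, (12 * (n : ℝ) - 18) * (aC n * y ^ n)
      - 12 * ∑' n : ℕ, (n : ℝ) * (aC n * y ^ n) = ∑' n : ℕ, (-18) * (aC n * y ^ n) := by
    rw [← tsum_mul_left (a := (12:ℝ)), ← Summable.tsum_sub hg2 (hsn.mul_left 12)]
    apply tsum_congr
    intro n; ring
  calc (1 - 12 * y) * (∑' n, aC n * ((n : ℝ) * y ^ (n - 1)))
      = (∑' n, aC n * ((n : ℝ) * y ^ (n - 1)))
        - 12 * (y * (∑' n, aC n * ((n : ℝ) * y ^ (n - 1)))) := by ring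
    _ = ∑' n : ℕ, (12 * (n : ℝ) - 18) * (aC n * y ^ n)
        - 12 * ∑' n : ℕ, (n : ℝ) * (aC n * y ^ n) := by rw [e2, e1]
    _ = ∑' n : ℕ, (-18) * (aC n * y ^ n) := e3
    _ = -18 * ∑' n, aC n * y ^ n := by rw [tsum_mul_left]

/-- Main closed form for the series. -/
lemma aC_tsum_eq {z : ℝ} (hz : |z| < 1 / 12) :
    (∑' n, aC n * z ^ n) = (1 - 12 * z) ^ ((3 : ℝ) / 2) := by
  set r : ℝ := (|z| + 1 / 12) / 2 with hrdef
  have habs : 0 ≤ |z| := abs_nonneg z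
  have hr0 : 0 < r := by rw [hrdef]; positivity
  have hrz : |z| < r := by rw [hrdef]; linarith
  have hr12 : r < 1 / 12 := by rw [hrdef]; linarith
  have hr24 : 1 / 24 ≤ r := by rw [hrdef]; linarith
  set t : Set ℝ := Metric.ball (0 : ℝ) r with htdef
  have hmem : ∀ y : ℝ, y ∈ t → |y| < r := by
    intro y hy
    have := Metric.mem_ball.mp hy
    rwa [Real.dist_eq, sub_zero] at this
  have hmem' : ∀ y : ℝ, |y| < r → y ∈ t := by
    intro y hy
    rw [Metric.mem_ball, Real.dist_eq, sub_zero]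
    exact hy
  have h12r : ‖12 * r‖ < 1 := by
    rw [Real.norm_eq_abs, abs_of_nonneg (by positivity)]; linarith
  have hu : Summable (fun n : ℕ => 1296 * ((n : ℝ) ^ 1 * (12 * r) ^ n)) :=
    (summable_pow_mul_geometric_of_norm_lt_one 1 h12r).mul_left 1296
  have hderiv : ∀ y ∈ t, HasDerivAt (fun w => ∑' n, aC n * w ^ n)
      (∑' n, aC n * ((n : ℝ) * y ^ (n - 1))) y := by
    intro y hy
    apply hasDerivAt_tsum_of_isPreconnected hu Metric.isOpen_ball
      (Convex.isPreconnected (convex_ball 0 r))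
      (fun n w _ => (hasDerivAt_pow n w).const_mul (aC n))
      _ (Metric.mem_ball_self hr0) (summable_aC (by norm_num)) hy
    intro n w hw
    have hwr : |w| < r := hmem w hw
    match n with
    | 0 => simp
    | (m + 1) =>
        rw [Real.norm_eq_abs, abs_mul, abs_mul]
        rw [show m + 1 - 1 = m from rfl]
        have habs1 : |((m + 1 : ℕ) : ℝ)| = (m : ℝ) + 1 := by
          rw [abs_of_nonneg (by positivity)]; push_cast; ring
        rw [habs1, abs_pow]
        have hwm : |w| ^ m ≤ r ^ m := pow_le_pow_left₀ (abs_nonneg w) hwr.le m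
        have hb := aC_bound (m + 1)
        have hm0 : (0:ℝ) ≤ (m : ℝ) + 1 := by positivity
        have step1 : |aC (m + 1)| * (((m : ℝ) + 1) * |w| ^ m)
            ≤ (54 * 12 ^ (m + 1)) * (((m : ℝ) + 1) * r ^ m) := by
          apply mul_le_mul hb _ (by positivity) (by positivity)
          exact mul_le_mul_of_nonneg_left hwm hm0
        apply step1.trans
        have hkey : (54 : ℝ) * 12 ^ (m + 1) * r ^ m ≤ 1296 * (12 * r) ^ (m + 1) := by
          rw [mul_pow]
          have h1 : (54 : ℝ) * r ^ m ≤ 1296 * r ^ (m + 1) := by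
            rw [pow_succ]
            have := pow_pos hr0 m
            nlinarith
          calc (54 : ℝ) * 12 ^ (m + 1) * r ^ m = 12 ^ (m + 1) * (54 * r ^ m) := by ring
            _ ≤ 12 ^ (m + 1) * (1296 * r ^ (m + 1)) := by
                apply mul_le_mul_of_nonneg_left h1 (by positivity)
            _ = 1296 * (12 ^ (m + 1) * r ^ (m + 1)) := by ring
        calc (54 * 12 ^ (m + 1)) * (((m : ℝ) + 1) * r ^ m)
            = ((m : ℝ) + 1) * (54 * 12 ^ (m + 1) * r ^ m) := by ring
          _ ≤ ((m : ℝ) + 1) * (1296 * (12 * r) ^ (m + 1)) := by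
              apply mul_le_mul_of_nonneg_left hkey hm0
          _ = 1296 * (((m + 1 : ℕ) : ℝ) ^ 1 * (12 * r) ^ (m + 1)) := by push_cast; ring
  -- F = h * (1-12w)^(-3/2) has zero derivative on t
  have hF : ∀ y ∈ t, HasDerivAt
      (fun w => (∑' n, aC n * w ^ n) * (1 - 12 * w) ^ (-(3 : ℝ) / 2)) 0 y := by
    intro y hy
    have hyr : |y| < r := hmem y hy
    have hy12 : |y| < 1 / 12 := hyr.trans hr12
    have hp : 0 < 1 - 12 * y := by
      rcases abs_lt.mp hy12 with ⟨h1, h2⟩; linarith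
    have h1 : HasDerivAt (fun w : ℝ => 1 - 12 * w) (-12) y := by
      have := ((hasDerivAt_id y).const_mul (12 : ℝ)).const_sub (1 : ℝ)
      simpa using this
    have h2 : HasDerivAt (fun w : ℝ => (1 - 12 * w) ^ (-(3 : ℝ) / 2))
        ((-12) * (-(3 : ℝ) / 2) * (1 - 12 * y) ^ (-(3 : ℝ) / 2 - 1)) y :=
      h1.rpow_const (Or.inl hp.ne')
    have h3 := (hderiv y hy).mul h2
    refine h3.congr_deriv (Eq.symm ?_)
    have hode := aC_ode hy12
    have hsplit : (1 - 12 * y) ^ (-(3 : ℝ) / 2)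
        = (1 - 12 * y) * (1 - 12 * y) ^ (-(3 : ℝ) / 2 - 1) := by
      calc (1 - 12 * y) ^ (-(3 : ℝ) / 2)
          = (1 - 12 * y) ^ ((1 : ℝ) + (-(3 : ℝ) / 2 - 1)) := by norm_num
        _ = (1 - 12 * y) ^ (1 : ℝ) * (1 - 12 * y) ^ (-(3 : ℝ) / 2 - 1) := Real.rpow_add hp _ _
        _ = (1 - 12 * y) * (1 - 12 * y) ^ (-(3 : ℝ) / 2 - 1) := by rw [Real.rpow_one]
    rw [hsplit]
    linear_combination (-(1 - 12 * y) ^ (-(3 : ℝ) / 2 - 1)) * hode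
  have hF0 : (∑' n, aC n * (0 : ℝ) ^ n) * (1 - 12 * (0:ℝ)) ^ (-(3 : ℝ) / 2) = 1 := by
    have h1 : ∑' n, aC n * (0 : ℝ) ^ n = 1 := by
      rw [tsum_eq_single 0]
      · norm_num [aC]
      · intro b hb
        simp [zero_pow hb]
    rw [h1]
    norm_num
  have hFz : (∑' n, aC n * z ^ n) * (1 - 12 * z) ^ (-(3 : ℝ) / 2) = 1 := by
    have hsub0 : ∀ x : ℝ, |x| ≤ |z| → x ∈ t := fun x hx => hmem' x (lt_of_le_of_lt hx hrz)
    rcases le_or_gt 0 z with h0 | h0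
    · have hsub : Icc (0:ℝ) z ⊆ t := by
        intro x hx
        apply hsub0
        rw [abs_of_nonneg hx.1, abs_of_nonneg h0]
        exact hx.2
      have hc := constant_of_has_deriv_right_zero
        (f := fun w => (∑' n, aC n * w ^ n) * (1 - 12 * w) ^ (-(3 : ℝ) / 2)) (a := 0) (b := z)
        (fun x hx => ((hF x (hsub hx)).continuousAt.continuousWithinAt))
        (fun x hx => (hF x (hsub (Ico_subset_Icc_self hx))).hasDerivWithinAt)
      have h' : (∑' n, aC n * z ^ n) * (1 - 12 * z) ^ (-(3 : ℝ) / 2)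
          = (∑' n, aC n * (0:ℝ) ^ n) * (1 - 12 * (0:ℝ)) ^ (-(3 : ℝ) / 2) :=
        hc z (right_mem_Icc.mpr h0)
      exact h'.trans hF0
    · have hsub : Icc z (0:ℝ) ⊆ t := by
        intro x hx
        apply hsub0
        rw [abs_of_nonpos (hx.2), abs_of_nonpos h0.le]
        linarith [hx.1]
      have hc := constant_of_has_deriv_right_zero
        (f := fun w => (∑' n, aC n * w ^ n) * (1 - 12 * w) ^ (-(3 : ℝ) / 2)) (a := z) (b := 0)
        (fun x hx => ((hF x (hsub hx)).continuousAt.continuousWithinAt))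
        (fun x hx => (hF x (hsub (Ico_subset_Icc_self hx))).hasDerivWithinAt)
      have h' : (∑' n, aC n * (0:ℝ) ^ n) * (1 - 12 * (0:ℝ)) ^ (-(3 : ℝ) / 2)
          = (∑' n, aC n * z ^ n) * (1 - 12 * z) ^ (-(3 : ℝ) / 2) :=
        hc 0 ⟨h0.le, le_refl 0⟩
      exact h'.symm.trans hF0
  have hp : 0 < 1 - 12 * z := by
    rcases abs_lt.mp hz with ⟨h1, h2⟩; linarith
  calc (∑' n, aC n * z ^ n)
      = (∑' n, aC n * z ^ n) * ((1 - 12 * z) ^ (-(3 : ℝ) / 2) * (1 - 12 * z) ^ ((3 : ℝ) / 2)) := by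
        rw [← Real.rpow_add hp, show (-(3:ℝ)/2 + 3/2) = 0 by norm_num, Real.rpow_zero, mul_one]
    _ = ((∑' n, aC n * z ^ n) * (1 - 12 * z) ^ (-(3 : ℝ) / 2)) * (1 - 12 * z) ^ ((3 : ℝ) / 2) := by
        ring
    _ = (1 - 12 * z) ^ ((3 : ℝ) / 2) := by rw [hFz, one_mul]

lemma aC_shift (n : ℕ) : aC (n + 3)
    = 54 * (2 * 3 ^ (n + 1) / (((n : ℝ) + 2) * ((n : ℝ) + 3))
        * (Nat.choose (2 * (n + 1)) (n + 1) : ℝ)) := by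
  induction n with
  | zero =>
      have h1 : aC 1 = -18 := by rw [show (1:ℕ) = 0 + 1 from rfl, aC_succ]; norm_num [aC]
      have h2 : aC 2 = 54 := by
        rw [show (2:ℕ) = 1 + 1 from rfl, aC_succ, h1]; norm_num
      have h3 : aC 3 = 108 := by
        rw [show (3:ℕ) = 2 + 1 from rfl, aC_succ, h2]; norm_num
      rw [h3]
      norm_num [Nat.choose]
  | succ n ih =>
      have hrec : aC (n + 4) = (12 * ((n : ℝ) + 3) - 18) / ((n : ℝ) + 4) * aC (n + 3) := by
        rw [show n + 4 = (n + 3) + 1 from rfl, aC_succ]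
        push_cast
        ring_nf
      have hB : ((n : ℝ) + 2) * (Nat.centralBinom (n + 2) : ℝ)
          = 2 * (2 * ((n : ℝ) + 1) + 1) * (Nat.centralBinom (n + 1) : ℝ) := by
        have := Nat.succ_mul_centralBinom_succ (n + 1)
        have h := congrArg (fun k : ℕ => (k : ℝ)) this
        push_cast at h
        push_cast
        linarith
      have hc1 : (Nat.choose (2 * (n + 1)) (n + 1) : ℝ) = (Nat.centralBinom (n + 1) : ℝ) := rfl
      have hc2 : (Nat.choose (2 * (n + 1 + 1)) (n + 1 + 1) : ℝ) = (Nat.centralBinom (n + 2) : ℝ) := rfl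
      rw [show n + 1 + 3 = n + 4 from rfl, hrec, ih, hc2, hc1]
      have hn2 : ((n : ℝ) + 2) ≠ 0 := by positivity
      have hn3 : ((n : ℝ) + 3) ≠ 0 := by positivity
      have hn4 : ((n : ℝ) + 4) ≠ 0 := by positivity
      have hB2 : (Nat.centralBinom (n + 2) : ℝ)
          = 2 * (2 * (n : ℝ) + 3) * (Nat.centralBinom (n + 1) : ℝ) / ((n : ℝ) + 2) := by
        rw [eq_div_iff hn2]
        linear_combination hB
      rw [hB2]
      push_cast
      field_simp
      ring

/-- The power series `M(z) = ∑_{n≥1} m_n z^n`, with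
`m_n = 2·3^n/((n+1)(n+2)) · C(2n,n)` the number of rooted planar maps with `n` edges,
satisfies `54 z² (M(z)+1) = 18z − 1 + (1−12z)^{3/2}` for `|z| < 1/12`. -/
theorem stmt_1 (z : ℝ) (hz : |z| < 1 / 12) :
    54 * z ^ 2 *
        ((∑' n : ℕ,
            (2 * 3 ^ (n + 1) / (((n : ℝ) + 2) * ((n : ℝ) + 3))
                * (Nat.choose (2 * (n + 1)) (n + 1) : ℝ)) * z ^ (n + 1)) + 1)
      = 18 * z - 1 + (1 - 12 * z) ^ ((3 : ℝ) / 2) := by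
  have hS : Summable (fun n => aC n * z ^ n) := summable_aC hz
  have hS1 : Summable (fun n => aC (n + 1) * z ^ (n + 1)) :=
    (summable_nat_add_iff (f := fun n => aC n * z ^ n) 1).mpr hS
  have hS2 : Summable (fun n => aC (n + 2) * z ^ (n + 2)) :=
    (summable_nat_add_iff (f := fun n => aC n * z ^ n) 2).mpr hS
  have h1 : aC 1 = -18 := by rw [show (1:ℕ) = 0 + 1 from rfl, aC_succ]; norm_num [aC]
  have h2 : aC 2 = 54 := by rw [show (2:ℕ) = 1 + 1 from rfl, aC_succ, h1]; norm_num
  have E1 : ∑' n, aC n * z ^ n = 1 + ∑' n, aC (n + 1) * z ^ (n + 1) := by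
    rw [Summable.tsum_eq_zero_add hS]
    norm_num [aC]
  have E2 : ∑' n, aC (n + 1) * z ^ (n + 1) = -18 * z + ∑' n, aC (n + 2) * z ^ (n + 2) := by
    rw [Summable.tsum_eq_zero_add hS1]
    norm_num [h1]
  have E3 : ∑' n, aC (n + 2) * z ^ (n + 2) = 54 * z ^ 2 + ∑' n, aC (n + 3) * z ^ (n + 3) := by
    rw [Summable.tsum_eq_zero_add hS2]
    norm_num [h2]
  have hM : 54 * z ^ 2 * (∑' n : ℕ,
      (2 * 3 ^ (n + 1) / (((n : ℝ) + 2) * ((n : ℝ) + 3))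
          * (Nat.choose (2 * (n + 1)) (n + 1) : ℝ)) * z ^ (n + 1))
      = ∑' n, aC (n + 3) * z ^ (n + 3) := by
    rw [← tsum_mul_left]
    apply tsum_congr
    intro n
    rw [aC_shift n]
    ring
  rw [← aC_tsum_eq hz, E1, E2, E3]
  linear_combination hM
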